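/- (Armijo condition for small steps) Suppose ∇f is L-Lipschitz continuous on the box C, H̃_k is symmetric with H̃_k ⪰ sI for some s > 0, and the step d_k = x_{k+1} − x_k satisfies ∇f(x_k)ᵀ d_k ≤ −(1/μ_k) d_kᵀ H̃_k d_k with x_k, x_{k+1} ∈ C. Then for any line search parameter α ∈ (0,1), if 0 < μ_k ≤ min(1, (2s/L)(1−α)), the sufficient decrease condition f(x_{k+1}) ≤ f(x_k) + α ∇f(x_k)ᵀ (x_{k+1} − x_k) holds. -/

import Mathlib

open Matrix

open RealInnerProductSpace in
lemma descent_lemma {n : ℕ} (f : EuclideanSpace ℝ (Fin n) → ℝ)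
    (g : EuclideanSpace ℝ (Fin n) → EuclideanSpace ℝ (Fin n))
    (hg : ∀ x, HasGradientAt f (g x) x)
    (C : Set (EuclideanSpace ℝ (Fin n))) (L : ℝ)
    (hlip : ∀ x ∈ C, ∀ y ∈ C, ‖g x - g y‖ ≤ L * ‖x - y‖)
    (hseg : ∀ t ∈ Set.Icc (0:ℝ) 1, ∀ x ∈ C, ∀ y ∈ C, x + t • (y - x) ∈ C)
    (x y : EuclideanSpace ℝ (Fin n)) (hx : x ∈ C) (hy : y ∈ C) :
    f y ≤ f x + ⟪g x, y - x⟫ + L / 2 * ‖y - x‖ ^ 2 := by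
  set d := y - x with hd
  set ψ : ℝ → ℝ := fun t => f (x + t • d) - ⟪g x, d⟫ * t - L / 2 * ‖d‖ ^ 2 * t ^ 2 with hψ
  have hψd : ∀ t : ℝ, HasDerivAt ψ
      (⟪g (x + t • d), d⟫ - ⟪g x, d⟫ - L * ‖d‖ ^ 2 * t) t := by
    intro t
    have h1 : HasDerivAt (fun t : ℝ => x + t • d) d t := by
      simpa using ((hasDerivAt_id t).smul_const d).const_add x
    have h2 : HasDerivAt (fun t : ℝ => f (x + t • d)) ⟪g (x + t • d), d⟫ t := by
      have h := (hg (x + t • d)).hasFDerivAt.comp_hasDerivAt t h1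
      simp at h
      exact h
    have h3 : HasDerivAt (fun t : ℝ => ⟪g x, d⟫ * t) ⟪g x, d⟫ t := by
      simpa using (hasDerivAt_id t).const_mul ⟪g x, d⟫
    have h4 : HasDerivAt (fun t : ℝ => L / 2 * ‖d‖ ^ 2 * t ^ 2)
        (L / 2 * ‖d‖ ^ 2 * (2 * t)) t := by
      simpa using ((hasDerivAt_pow 2 t).const_mul (L / 2 * ‖d‖ ^ 2))
    have := (h2.sub h3).sub h4
    rw [show L * ‖d‖ ^ 2 * t = L / 2 * ‖d‖ ^ 2 * (2 * t) by ring]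
    exact this
  have hmono : AntitoneOn ψ (Set.Icc 0 1) := by
    apply antitoneOn_of_deriv_nonpos (convex_Icc 0 1)
    · have hdiff : Differentiable ℝ ψ := fun t => (hψd t).differentiableAt
      exact hdiff.continuous.continuousOn
    · exact fun t _ => ((hψd t).differentiableAt).differentiableWithinAt
    · intro t ht
      rw [interior_Icc] at ht
      rw [(hψd t).deriv]
      have hmem : x + t • d ∈ C := hseg t ⟨ht.1.le, ht.2.le⟩ x hx y hy
      have hb : ⟪g (x + t • d) - g x, d⟫ ≤ L * t * ‖d‖ ^ 2 := by
        calc ⟪g (x + t • d) - g x, d⟫ ≤ ‖g (x + t • d) - g x‖ * ‖d‖ :=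
              real_inner_le_norm _ _
          _ ≤ (L * ‖x + t • d - x‖) * ‖d‖ := by
              apply mul_le_mul_of_nonneg_right (hlip _ hmem _ hx) (norm_nonneg _)
          _ = L * t * ‖d‖ ^ 2 := by
              rw [add_sub_cancel_left, norm_smul, Real.norm_eq_abs, abs_of_pos ht.1]
              ring
      rw [inner_sub_left] at hb
      linarith
  have h01 : ψ 1 ≤ ψ 0 := hmono (by norm_num) (by norm_num) zero_le_one
  have e0 : ψ 0 = f x := by
    simp only [hψ, zero_smul, add_zero, mul_zero, sub_zero, ne_eq,
      OfNat.ofNat_ne_zero, not_false_eq_true, zero_pow]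
  have e1 : ψ 1 = f y - ⟪g x, d⟫ - L / 2 * ‖d‖ ^ 2 := by
    simp only [hψ, one_smul, mul_one, one_pow, hd, add_sub_cancel]
  rw [e0, e1] at h01
  linarith

theorem stmt4 {n : ℕ} (f : EuclideanSpace ℝ (Fin n) → ℝ)
    (g : EuclideanSpace ℝ (Fin n) → EuclideanSpace ℝ (Fin n))
    (hg : ∀ x, HasGradientAt f (g x) x)
    (lo hi : Fin n → ℝ) (C : Set (EuclideanSpace ℝ (Fin n)))
    (hC : C = {v : EuclideanSpace ℝ (Fin n) | ∀ i, lo i ≤ v i ∧ v i ≤ hi i})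
    (L s α : ℝ) (hL : 0 < L) (hs : 0 < s) (hα0 : 0 < α) (hα1 : α < 1)
    (hlip : ∀ x ∈ C, ∀ y ∈ C, ‖g x - g y‖ ≤ L * ‖x - y‖)
    (Hk : Matrix (Fin n) (Fin n) ℝ) (hsym : Hk.IsSymm)
    (hpd : ∀ z : Fin n → ℝ, s * (z ⬝ᵥ z) ≤ z ⬝ᵥ Hk *ᵥ z)
    (xk xk1 : EuclideanSpace ℝ (Fin n)) (hxk : xk ∈ C) (hxk1 : xk1 ∈ C)
    (μ : ℝ) (hμ0 : 0 < μ) (hμ : μ ≤ min 1 (2 * s / L * (1 - α)))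
    (hdesc : g xk ⬝ᵥ (xk1 - xk) ≤ -(1 / μ) * ((xk1 - xk) ⬝ᵥ Hk *ᵥ (xk1 - xk))) :
    f xk1 ≤ f xk + α * (g xk ⬝ᵥ (xk1 - xk)) := by
  have hdot : ∀ a b : EuclideanSpace ℝ (Fin n), (a : Fin n → ℝ) ⬝ᵥ b = (inner ℝ a b : ℝ) := by
    intro a b
    simp [dotProduct, PiLp.inner_apply, RCLike.inner_apply, mul_comm]
  have hseg : ∀ t ∈ Set.Icc (0:ℝ) 1, ∀ x ∈ C, ∀ y ∈ C, x + t • (y - x) ∈ C := by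
    intro t ht x hx y hy
    rw [hC] at hx hy ⊢
    intro i
    have h1 := hx i
    have h2 := hy i
    have : (x + t • (y - x)) i = x i + t * (y i - x i) := by
      simp [PiLp.add_apply, PiLp.smul_apply, PiLp.sub_apply]
    rw [this]
    constructor <;> nlinarith [ht.1, ht.2]
  set d : EuclideanSpace ℝ (Fin n) := xk1 - xk with hd
  have hdl := descent_lemma f g hg C L hlip hseg xk xk1 hxk hxk1
  set D : ℝ := (inner ℝ (g xk) d : ℝ) with hD
  set N : ℝ := ‖d‖ ^ 2 with hN
  have hNnn : 0 ≤ N := sq_nonneg _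
  have hQ : s * N ≤ (d : Fin n → ℝ) ⬝ᵥ Hk *ᵥ (d : Fin n → ℝ) := by
    have hdd : (d : Fin n → ℝ) ⬝ᵥ (d : Fin n → ℝ) = N := by
      rw [hdot d d, hN, real_inner_self_eq_norm_sq]
    calc s * N = s * ((d : Fin n → ℝ) ⬝ᵥ (d : Fin n → ℝ)) := by rw [hdd]
      _ ≤ _ := hpd d
  set Q : ℝ := (d : Fin n → ℝ) ⬝ᵥ Hk *ᵥ (d : Fin n → ℝ) with hQdef
  have hdescD : D ≤ -(1 / μ) * Q := by rw [hD, ← hdot]; exact hdesc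
  have hgoal : g xk ⬝ᵥ (xk1 - xk) = D := by rw [hD, ← hdot]; rfl
  rw [hgoal]
  have hμ2 : μ * L ≤ 2 * s * (1 - α) := by
    have := le_trans hμ (min_le_right _ _)
    rw [div_mul_eq_mul_div, le_div_iff₀ hL] at this
    linarith
  have h1 : μ * D ≤ -Q := by
    calc μ * D ≤ μ * (-(1 / μ) * Q) := mul_le_mul_of_nonneg_left hdescD hμ0.le
      _ = -Q := by field_simp
  have hfin : (1 - α) * D + L / 2 * N ≤ 0 := by
    have hA : (1 - α) * (μ * D + s * N) ≤ 0 :=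
      mul_nonpos_of_nonneg_of_nonpos (by linarith) (by linarith)
    have hB : 0 ≤ (2 * s * (1 - α) - μ * L) * N := mul_nonneg (by linarith) hNnn
    nlinarith [hμ0]
  linarith [hdl]
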